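/- Let $a_n = \frac{1}{n!}$ and let $d_n^{(k)} = \det(a_{i+j+k-2})_{1 \le i,j \le n}$. Then $d_n^{(k)} = (-1)^{\binom{n}{2}} \prod_{i=0}^{n-1} \frac{i!}{(i+k+n-1)!}$. -/

import Mathlib

open Finset

lemma fact_add_prod (m d : ℕ) :
    (m + d).factorial = m.factorial * ∏ s ∈ Finset.range d, (m + 1 + s) := by
  induction d with
  | zero => simp
  | succ d ih =>
    rw [Finset.prod_range_succ, ← mul_assoc, ← ih, ← Nat.add_assoc,
      Nat.factorial_succ, mul_comm]
    ring

lemma revPerm_succ_eq (n : ℕ) :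
    finRotate (n + 1) * (Fin.revPerm : Equiv.Perm (Fin (n + 1))) =
      Equiv.Perm.decomposeFin.symm (0, Fin.revPerm) := by
  ext i
  refine Fin.cases ?_ (fun x => ?_) i
  · simp [Fin.rev_zero, finRotate_last]
  · simp only [Equiv.Perm.coe_mul, Function.comp_apply, Fin.revPerm_apply,
      Equiv.Perm.decomposeFin_symm_apply_succ, Equiv.swap_self, Equiv.refl_apply]
    rw [Fin.rev_succ]
    have h1 : (x.rev.castSucc : Fin (n+1)) ≠ Fin.last n := by
      simp only [ne_eq, Fin.ext_iff, Fin.coe_castSucc, Fin.val_last, Fin.val_rev]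
      omega
    rw [coe_finRotate, if_neg h1]
    simp

lemma sign_revPerm (n : ℕ) :
    Equiv.Perm.sign (Fin.revPerm : Equiv.Perm (Fin n)) = (-1) ^ n.choose 2 := by
  induction n with
  | zero =>
    have : (Fin.revPerm : Equiv.Perm (Fin 0)) = 1 := Subsingleton.elim _ _
    simp [this]
  | succ n ih =>
    have h := congrArg Equiv.Perm.sign (revPerm_succ_eq n)
    rw [map_mul, sign_finRotate, Nat.add_sub_cancel, Equiv.Perm.decomposeFin.symm_sign, if_pos rfl, one_mul, ih] at h
    have hc : (n + 1).choose 2 = n + n.choose 2 := by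
      rw [Nat.choose_succ_succ, Nat.choose_one_right]
    have key : ((-1 : ℤˣ)) ^ n * ((-1 : ℤˣ)) ^ n = 1 := by
      rw [← pow_add, ← two_mul, pow_mul]; simp
    calc Equiv.Perm.sign (Fin.revPerm : Equiv.Perm (Fin (n + 1)))
        = (-1) ^ n * ((-1) ^ n * Equiv.Perm.sign (Fin.revPerm : Equiv.Perm (Fin (n + 1)))) := by
          rw [← mul_assoc, key, one_mul]
      _ = (-1) ^ ((n + 1).choose 2) := by rw [h, hc, pow_add]

theorem stmt9 (n k : ℕ) (hn : 1 ≤ n) :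
    (Matrix.of fun i j : Fin n =>
        (1 : ℚ) / (((i : ℕ) + (j : ℕ) + k).factorial : ℚ)).det =
      (-1) ^ n.choose 2 *
        ∏ i ∈ Finset.range n, (i.factorial : ℚ) / ((i + k + n - 1).factorial : ℚ) := by
  obtain ⟨m, rfl⟩ : ∃ m, n = m + 1 := ⟨n - 1, by omega⟩
  clear hn
  -- the polynomials
  set p : Fin (m + 1) → Polynomial ℚ := fun j =>
    ∏ s ∈ Finset.range (j : ℕ), (Polynomial.X + Polynomial.C ((k + m + 1 - (j : ℕ) + s : ℕ) : ℚ))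
    with hp
  have h_monic : ∀ j, (p j).Monic := fun j =>
    Polynomial.monic_prod_of_monic _ _ fun s _ => Polynomial.monic_X_add_C _
  have h_deg : ∀ j : Fin (m + 1), (p j).natDegree = (j : ℕ) := by
    intro j
    rw [hp]
    rw [Polynomial.natDegree_prod _ _ (fun s _ => (Polynomial.monic_X_add_C _).ne_zero),
      Finset.sum_congr rfl (fun s _ => Polynomial.natDegree_X_add_C _)]
    simp
  have heval : ∀ (i j : Fin (m + 1)),
      (p (Fin.rev j)).eval ((i : ℕ) : ℚ) =
        ((((i : ℕ) + k + m).factorial : ℚ)) / (((i : ℕ) + (j : ℕ) + k).factorial : ℚ) := by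
    intro i j
    have hj : (Fin.rev j : ℕ) = m - (j : ℕ) := by
      rw [Fin.val_rev]; omega
    have hfac : ((i : ℕ) + k + m).factorial =
        ((i : ℕ) + (j : ℕ) + k).factorial *
          ∏ s ∈ Finset.range (m - (j : ℕ)), ((i : ℕ) + (j : ℕ) + k + 1 + s) := by
      have := fact_add_prod ((i : ℕ) + (j : ℕ) + k) (m - (j : ℕ))
      have hq : (i : ℕ) + (j : ℕ) + k + (m - (j : ℕ)) = (i : ℕ) + k + m := by
        have := j.is_lt; omega
      rw [hq] at this
      exact this
    rw [hp]
    simp only [Polynomial.eval_prod, Polynomial.eval_add, Polynomial.eval_X, Polynomial.eval_C]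
    have hterm : ∀ s ∈ Finset.range ((Fin.rev j : ℕ)),
        ((i : ℕ) : ℚ) + ((k + m + 1 - (Fin.rev j : ℕ) + s : ℕ) : ℚ) =
          (((i : ℕ) + (j : ℕ) + k + 1 + s : ℕ) : ℚ) := by
      intro s hs
      have hjlt := j.is_lt
      have : k + m + 1 - (Fin.rev j : ℕ) + s = (j : ℕ) + k + 1 + s := by
        rw [hj]; omega
      rw [this]
      push_cast
      ring
    rw [Finset.prod_congr rfl hterm, hj]
    rw [eq_div_iff (by positivity)]
    rw [hfac]
    push_cast
    ring
  -- rewrite the matrix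
  have hM : (Matrix.of fun i j : Fin (m + 1) =>
        (1 : ℚ) / (((i : ℕ) + (j : ℕ) + k).factorial : ℚ)) =
      Matrix.of (fun i j : Fin (m + 1) =>
        ((1 : ℚ) / (((i : ℕ) + k + m).factorial : ℚ)) *
          ((Matrix.of fun i j : Fin (m + 1) =>
            (p j).eval (((i : Fin (m+1)) : ℕ) : ℚ)).submatrix id Fin.revPerm) i j) := by
    ext i j
    simp only [Matrix.of_apply, Matrix.submatrix_apply, id_eq, Fin.revPerm_apply]
    rw [heval i j, div_mul_div_comm, one_mul,
      div_eq_div_iff (by positivity) (by positivity)]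
    ring
  rw [hM, Matrix.det_mul_column, Matrix.det_permute', sign_revPerm]
  have hvand := (Matrix.det_eval_matrixOfPolynomials_eq_det_vandermonde
    (fun i : Fin (m + 1) => ((i : ℕ) : ℚ)) p h_deg h_monic).symm
  rw [hvand, Matrix.det_vandermonde_id_eq_superFactorial]
  -- now pure arithmetic
  have hsub : ∀ i, i + k + (m + 1) - 1 = i + k + m := fun i => by omega
  simp only [hsub]
  rw [← Nat.prod_range_succ_factorial m]
  rw [Fin.prod_univ_eq_prod_range (fun i => (1 : ℚ) / ((i + k + m).factorial : ℚ))]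
  simp only [div_eq_mul_inv, one_mul]
  push_cast
  rw [Finset.prod_mul_distrib]
  ring
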